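/- Let n ≥ 1 and let S_n be the star graph on vertices {0,1,...,n-1}. A partial transformation α of {0,1,...,n-1} is a partial strong weak endomorphism of S_n if and only if one of the following holds: (1) 0 ∉ dom(α) and either im(α) = {0} or im(α) ⊆ {1,...,n-1}; (2) 0 ∈ dom(α), 0α = 0, and either im(α) = {0} or α maps dom(α) ∩ {1,...,n-1} into {1,...,n-1}; (3) 0 ∈ dom(α), 0α ≠ 0, and either im(α) = {0α} or α maps dom(α) ∩ {1,...,n-1} onto a subset of {0} with dom(α) ∩ {1,...,n-1} mapping to {0}. -/

import Mathlib

def pmul {V : Type*} (f g : V → Option V) : V → Option V := fun x => (f x).bind g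

def pdom {V : Type*} (f : V → Option V) : Set V := {x | f x ≠ none}

def pim {V : Type*} (f : V → Option V) : Set V := {y | ∃ x, f x = some y}

def pker {V : Type*} (f : V → Option V) : V → V → Prop := fun x y => f x ≠ none ∧ f x = f y

def PInj {V : Type*} (f : V → Option V) : Prop := ∀ u v a, f u = some a → f v = some a → u = v

def edge {n : ℕ} (u v : Fin n) : Prop := (u.val = 0 ∧ v.val ≠ 0) ∨ (v.val = 0 ∧ u.val ≠ 0)

def IsPEnd {n : ℕ} (α : Fin n → Option (Fin n)) : Prop :=
  ∀ u v a b, α u = some a → α v = some b → edge u v → edge a b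

def IsPwEnd {n : ℕ} (α : Fin n → Option (Fin n)) : Prop :=
  ∀ u v a b, α u = some a → α v = some b → edge u v → a ≠ b → edge a b

def IsPsEnd {n : ℕ} (α : Fin n → Option (Fin n)) : Prop :=
  ∀ u v a b, α u = some a → α v = some b → (edge u v ↔ edge a b)

def IsPswEnd {n : ℕ} (α : Fin n → Option (Fin n)) : Prop :=
  ∀ u v a b, α u = some a → α v = some b → ((edge u v ∧ a ≠ b) ↔ edge a b)

def PEndS (n : ℕ) : Set (Fin n → Option (Fin n)) := {α | IsPEnd α}
def PwEndS (n : ℕ) : Set (Fin n → Option (Fin n)) := {α | IsPwEnd α}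
def PsEndS (n : ℕ) : Set (Fin n → Option (Fin n)) := {α | IsPsEnd α}
def PswEndS (n : ℕ) : Set (Fin n → Option (Fin n)) := {α | IsPswEnd α}
def IEndS (n : ℕ) : Set (Fin n → Option (Fin n)) := {α | PInj α ∧ IsPEnd α}
def PAutS (n : ℕ) : Set (Fin n → Option (Fin n)) := {α | PInj α ∧ IsPsEnd α}

def RegularIn {V : Type*} (M : Set (V → Option V)) (a : V → Option V) : Prop :=
  ∃ b ∈ M, pmul (pmul a b) a = a

def GreenL {V : Type*} (M : Set (V → Option V)) (a b : V → Option V) : Prop :=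
  (∃ g ∈ M, a = pmul g b) ∧ (∃ g ∈ M, b = pmul g a)

def GreenR {V : Type*} (M : Set (V → Option V)) (a b : V → Option V) : Prop :=
  (∃ g ∈ M, a = pmul b g) ∧ (∃ g ∈ M, b = pmul a g)

def GreenH {V : Type*} (M : Set (V → Option V)) (a b : V → Option V) : Prop :=
  GreenL M a b ∧ GreenR M a b

def GreenJ {V : Type*} (M : Set (V → Option V)) (a b : V → Option V) : Prop :=
  (∃ g ∈ M, ∃ h ∈ M, a = pmul (pmul g b) h) ∧ (∃ g ∈ M, ∃ h ∈ M, b = pmul (pmul g a) h)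

theorem stmt6 (n : ℕ) (hn : 1 ≤ n) (α : Fin n → Option (Fin n)) :
    IsPswEnd α ↔
      (((⟨0, hn⟩ : Fin n) ∉ pdom α
          ∧ (pim α = {(⟨0, hn⟩ : Fin n)} ∨ pim α ⊆ {x : Fin n | x ≠ ⟨0, hn⟩}))
        ∨ (α ⟨0, hn⟩ = some ⟨0, hn⟩
            ∧ (pim α = {(⟨0, hn⟩ : Fin n)}
                ∨ ∀ x a : Fin n, x ≠ ⟨0, hn⟩ → α x = some a → a ≠ ⟨0, hn⟩))
        ∨ (∃ b : Fin n, α ⟨0, hn⟩ = some b ∧ b ≠ ⟨0, hn⟩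
            ∧ (pim α = {b}
                ∨ ∀ x a : Fin n, x ≠ ⟨0, hn⟩ → α x = some a → a = ⟨0, hn⟩))) := by
  set z : Fin n := ⟨0, hn⟩ with hz
  have hval : ∀ p : Fin n, p = z ↔ p.val = 0 := by
    intro p
    constructor
    · rintro rfl; rfl
    · intro h; exact Fin.ext h
  have hedge : ∀ u v : Fin n, edge u v ↔ ¬(u = z ↔ v = z) := by
    intro u v
    simp only [edge, hval]
    tauto
  constructor
  · intro hα
    rcases h0 : α z with _ | c
    · left
      constructor
      · simp [pdom, h0]
      · by_cases hzim : z ∈ pim α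
        · left
          obtain ⟨x, hx⟩ := hzim
          have hxz : x ≠ z := by
            rintro rfl; rw [h0] at hx; exact nomatch hx
          ext a
          simp only [Set.mem_singleton_iff, pim, Set.mem_setOf_eq]
          constructor
          · rintro ⟨y, hy⟩
            by_contra hne
            have hyz : y ≠ z := by
              rintro rfl; rw [h0] at hy; exact nomatch hy
            have hE : edge a z := (hedge a z).mpr (by tauto)
            have := (hα y x a z hy hx).mpr hE
            exact ((hedge y x).mp this.1) (by tauto)
          · rintro rfl; exact ⟨x, hx⟩
        · right
          rintro a ⟨y, hy⟩
          simp only [Set.mem_setOf_eq]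
          rintro rfl
          exact hzim ⟨y, hy⟩
    · by_cases hcz : c = z
      · subst hcz
        right; left
        refine ⟨rfl, ?_⟩
        by_cases hex : ∃ x : Fin n, ∃ a : Fin n, x ≠ z ∧ α x = some a ∧ a = z
        · left
          obtain ⟨x, a, hxz, hx, rfl⟩ := hex
          ext d
          simp only [Set.mem_singleton_iff, pim, Set.mem_setOf_eq]
          constructor
          · rintro ⟨y, hy⟩
            by_cases hyz : y = z
            · rw [hyz, h0] at hy; exact (Option.some.injEq _ _ ▸ hy).symm ▸ rfl
            · have hne : ¬ edge x y := fun h => ((hedge x y).mp h) (by tauto)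
              have := (hα x y z d hx hy)
              by_contra hdz
              have hE : edge z d := (hedge z d).mpr (by tauto)
              exact hne (this.mpr hE).1
          · rintro rfl; exact ⟨z, h0⟩
        · right
          push_neg at hex
          intro x a hxz ha
          exact hex x a hxz ha
      · right; right
        refine ⟨c, rfl, hcz, ?_⟩
        by_cases hex : ∃ x : Fin n, ∃ a : Fin n, x ≠ z ∧ α x = some a ∧ a = z
        · right
          obtain ⟨x0, a0, hx0z, hx0, rfl⟩ := hex
          intro x a hxz ha
          have hne : ¬ edge x x0 := fun h => ((hedge x x0).mp h) (by tauto)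
          by_contra haz
          have hE : edge a z := (hedge a z).mpr (by tauto)
          exact hne ((hα x x0 a z ha hx0).mpr hE).1
        · left
          push_neg at hex
          ext d
          simp only [Set.mem_singleton_iff, pim, Set.mem_setOf_eq]
          constructor
          · rintro ⟨y, hy⟩
            by_cases hyz : y = z
            · rw [hyz, h0] at hy; exact (Option.some.injEq _ _).mp hy.symm
            · have hdz : d ≠ z := hex y d hyz hy
              have hE : edge y z := (hedge y z).mpr (by tauto)
              by_contra hdc
              have := (hα y z d c hy h0).mp ⟨hE, hdc⟩
              exact ((hedge d c).mp this) (by tauto)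
          · rintro rfl; exact ⟨z, h0⟩
  · rintro (⟨hd, him⟩ | ⟨h0, him⟩ | ⟨c, h0, hcz, him⟩) <;> intro u v a b hu hv
    · have h0 : α z = none := by
        by_contra h; exact hd h
      have huz : u ≠ z := by rintro rfl; rw [h0] at hu; exact nomatch hu
      have hvz : v ≠ z := by rintro rfl; rw [h0] at hv; exact nomatch hv
      have heuv : ¬ edge u v := fun h => ((hedge u v).mp h) (by tauto)
      rcases him with him | him
      · have ha : a = z := by
          have : a ∈ pim α := ⟨u, hu⟩
          rwa [him, Set.mem_singleton_iff] at this
        have hb : b = z := by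
          have : b ∈ pim α := ⟨v, hv⟩
          rwa [him, Set.mem_singleton_iff] at this
        subst ha; subst hb
        have : ¬ edge z z := fun h => ((hedge z z).mp h) Iff.rfl
        tauto
      · have ha : a ≠ z := him ⟨u, hu⟩
        have hb : b ≠ z := him ⟨v, hv⟩
        have : ¬ edge a b := fun h => ((hedge a b).mp h) (by tauto)
        tauto
    · rcases him with him | him
      · have ha : a = z := by
          have : a ∈ pim α := ⟨u, hu⟩
          rwa [him, Set.mem_singleton_iff] at this
        have hb : b = z := by
          have : b ∈ pim α := ⟨v, hv⟩
          rwa [him, Set.mem_singleton_iff] at this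
        subst ha; subst hb
        have : ¬ edge z z := fun h => ((hedge z z).mp h) Iff.rfl
        tauto
      · have hua : u = z ↔ a = z := by
          constructor
          · rintro rfl; rw [h0] at hu; exact ((Option.some.injEq _ _).mp hu).symm
          · intro ha; by_contra huz; exact him u a huz hu ha
        have hvb : v = z ↔ b = z := by
          constructor
          · rintro rfl; rw [h0] at hv; exact ((Option.some.injEq _ _).mp hv).symm
          · intro hb; by_contra hvz; exact him v b hvz hv hb
        rw [hedge u v, hedge a b]
        constructor
        · rintro ⟨he, _⟩ hiff
          exact he ((hua.trans hiff).trans hvb.symm)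
        · intro he
          refine ⟨fun hiff => he ((hua.symm.trans hiff).trans hvb), ?_⟩
          rintro rfl
          exact he Iff.rfl
    · rcases him with him | him
      · have ha : a = c := by
          have : a ∈ pim α := ⟨u, hu⟩
          rwa [him, Set.mem_singleton_iff] at this
        have hb : b = c := by
          have : b ∈ pim α := ⟨v, hv⟩
          rwa [him, Set.mem_singleton_iff] at this
        have : ¬ edge a b := by
          rw [ha, hb]; exact fun h => ((hedge c c).mp h) Iff.rfl
        have hab : a = b := ha.trans hb.symm
        tauto
      · have hua : u = z ↔ ¬ a = z := by
          constructor
          · rintro rfl; rw [h0] at hu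
            rw [← (Option.some.injEq _ _).mp hu]; exact hcz
          · intro ha; by_contra huz
            exact ha (him u a huz hu)
        have hvb : v = z ↔ ¬ b = z := by
          constructor
          · rintro rfl; rw [h0] at hv
            rw [← (Option.some.injEq _ _).mp hv]; exact hcz
          · intro hb; by_contra hvz
            exact hb (him v b hvz hv)
        rw [hedge u v, hedge a b]
        constructor
        · rintro ⟨he, _⟩ hiff
          exact he ((hua.trans (not_iff_not.mpr hiff)).trans hvb.symm)
        · intro he
          refine ⟨fun hiff => he (not_iff_not.mp ((hua.symm.trans hiff).trans hvb)), ?_⟩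
          rintro rfl
          exact he Iff.rfl
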